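/- For every z ∈ ℂ \ [−1,1], the logarithmic potential of the arcsine measure satisfies ∫_{−1}^{1} log(1/|z−y|)·(1/(π√(1−y²))) dy = log 2 − log|z + √(z²−1)|, where √(z²−1) denotes the branch of the square root on ℂ \ [−1,1] that is positive for z > 1 (so that |z + √(z²−1)| > 1). -/

import Mathlib

open Complex MeasureTheory intervalIntegral Set Metric

noncomputable section

private lemma slit_aux (u x : ℂ) (hu : ‖u‖ < 1) (hx : ‖x‖ ≤ 1) :
    1 - u * x ∈ Complex.slitPlane := by
  rw [Complex.mem_slitPlane_iff]
  left
  have h1 : ‖u * x‖ < 1 := by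
    rw [norm_mul]
    calc ‖u‖ * ‖x‖ ≤ ‖u‖ * 1 := by
          exact mul_le_mul_of_nonneg_left hx (norm_nonneg u)
      _ < 1 := by simpa using hu
  have h2 : |(u * x).re| ≤ ‖u * x‖ := Complex.abs_re_le_norm _
  have h3 : (u * x).re < 1 := lt_of_le_of_lt (le_trans (le_abs_self _) h2) h1
  simp only [Complex.sub_re, Complex.one_re]
  linarith

private lemma mv_complex (u : ℂ) (hu : ‖u‖ < 1) :
    ∫ θ in (0:ℝ)..(2 * Real.pi), Complex.log (1 - u * Complex.exp (θ * Complex.I)) = 0 := by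
  set f : ℂ → ℂ := fun ζ => Complex.log (1 - u * ζ) with hf
  have hdiff : ∀ x : ℂ, ‖x‖ ≤ 1 → DifferentiableAt ℂ f x := by
    intro x hx
    exact ((differentiableAt_const (1:ℂ)).sub ((differentiableAt_id).const_mul u)).clog
      (slit_aux u x hu hx)
  have hd : DiffContOnCl ℂ f (ball (0:ℂ) 1) := by
    constructor
    · intro x hx
      exact (hdiff x (le_of_lt (by simpa using mem_ball_zero_iff.mp hx))).differentiableWithinAt
    · intro x hx
      rw [closure_ball (0:ℂ) one_ne_zero] at hx
      exact (hdiff x (by simpa using mem_closedBall_zero_iff.mp hx)).continuousAt.continuousWithinAt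
  have key := hd.circleIntegral_sub_inv_smul (mem_ball_self one_pos)
  have hf0 : f 0 = 0 := by simp [hf]
  rw [hf0, smul_zero] at key
  rw [circleIntegral] at key
  simp only [deriv_circleMap, circleMap_zero, smul_eq_mul, sub_zero, Complex.ofReal_one] at key
  have hrw : ∀ θ : ℝ, (1 * Complex.exp (θ * Complex.I) * Complex.I) *
      ((1 * Complex.exp (θ * Complex.I))⁻¹ * f (1 * Complex.exp (θ * Complex.I)))
      = Complex.I * f (Complex.exp (θ * Complex.I)) := by
    intro θ
    have : Complex.exp (θ * Complex.I) ≠ 0 := Complex.exp_ne_zero _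
    field_simp
  rw [intervalIntegral.integral_congr (fun θ _ => hrw θ)] at key
  rw [intervalIntegral.integral_const_mul] at key
  have := mul_eq_zero.mp key
  rcases this with h | h
  · exact absurd h Complex.I_ne_zero
  · simpa [hf] using h

private lemma cont_abs_aux (c u : ℂ) (h : ∀ θ : ℝ, c - u * Complex.exp (θ * Complex.I) ≠ 0) :
    Continuous fun θ : ℝ => Real.log (‖c - u * Complex.exp (θ * Complex.I)‖) := by
  apply Continuous.log
  · exact (continuous_norm.comp (by continuity))
  · intro θ
    simp only [ne_eq, norm_eq_zero]
    exact h θ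

private lemma mv_real (u : ℂ) (hu : ‖u‖ < 1) :
    ∫ θ in (0:ℝ)..(2 * Real.pi),
      Real.log (‖1 - u * Complex.exp (θ * Complex.I)‖) = 0 := by
  have hne : ∀ θ : ℝ, (1:ℂ) - u * Complex.exp (θ * Complex.I) ≠ 0 := by
    intro θ
    exact Complex.slitPlane_ne_zero (slit_aux u _ hu (le_of_eq (Complex.norm_exp_ofReal_mul_I θ)))
  have hcont : Continuous fun θ : ℝ => Complex.log (1 - u * Complex.exp (θ * Complex.I)) := by
    rw [continuous_iff_continuousAt]
    intro θ
    exact ContinuousAt.clog (by fun_prop) (slit_aux u _ hu (le_of_eq (Complex.norm_exp_ofReal_mul_I θ)))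
  have hint : IntervalIntegrable
      (fun θ : ℝ => Complex.log (1 - u * Complex.exp (θ * Complex.I))) volume 0 (2 * Real.pi) :=
    hcont.intervalIntegrable _ _
  have := Complex.reCLM.intervalIntegral_comp_comm hint
  rw [mv_complex u hu] at this
  simp only [Complex.reCLM_apply, map_zero] at this
  rw [← this]
  congr 1
  funext θ
  rw [← Complex.log_re]

private lemma phi_sub_exp_ne (Φ : ℂ) (h : 1 < ‖Φ‖) (θ : ℝ) :
    Φ - Complex.exp (θ * Complex.I) ≠ 0 := by
  intro hc
  have : Φ = Complex.exp (θ * Complex.I) := by linear_combination hc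
  rw [this, Complex.norm_exp_ofReal_mul_I] at h
  exact lt_irrefl 1 h

private lemma cont_phi (Φ : ℂ) (h : 1 < ‖Φ‖) :
    Continuous fun θ : ℝ => Real.log (‖Φ - Complex.exp (θ * Complex.I)‖) := by
  have := cont_abs_aux Φ 1 (fun θ => by simpa using phi_sub_exp_ne Φ h θ)
  simpa using this

private lemma circle_log (Φ : ℂ) (h : 1 < ‖Φ‖) :
    ∫ θ in (0:ℝ)..(2 * Real.pi),
      Real.log (‖Φ - Complex.exp (θ * Complex.I)‖)
      = 2 * Real.pi * Real.log (‖Φ‖) := by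
  have hΦ0 : Φ ≠ 0 := by
    intro hc; rw [hc] at h; simp at h; linarith
  have habsinv : ‖Φ⁻¹‖ < 1 := by
    rw [norm_inv]
    exact inv_lt_one_of_one_lt₀ h
  have hne : ∀ θ : ℝ, (1:ℂ) - Φ⁻¹ * Complex.exp (θ * Complex.I) ≠ 0 := fun θ =>
    Complex.slitPlane_ne_zero (slit_aux Φ⁻¹ _ habsinv (le_of_eq (Complex.norm_exp_ofReal_mul_I θ)))
  have hrw : ∀ θ : ℝ, Real.log (‖Φ - Complex.exp (θ * Complex.I)‖)
      = Real.log (‖Φ‖)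
        + Real.log (‖1 - Φ⁻¹ * Complex.exp (θ * Complex.I)‖) := by
    intro θ
    have hfac : Φ - Complex.exp (θ * Complex.I)
        = Φ * (1 - Φ⁻¹ * Complex.exp (θ * Complex.I)) := by
      field_simp
    rw [hfac, norm_mul, Real.log_mul (norm_ne_zero_iff.mpr hΦ0) (norm_ne_zero_iff.mpr (hne θ))]
  rw [intervalIntegral.integral_congr (fun θ _ => hrw θ)]
  rw [intervalIntegral.integral_add (intervalIntegrable_const)
    ((cont_abs_aux 1 Φ⁻¹ (fun θ => by simpa using hne θ)).intervalIntegrable _ _)]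
  rw [mv_real Φ⁻¹ habsinv, intervalIntegral.integral_const]
  simp [mul_comm]

private lemma reflect_integral (Φ : ℂ) :
    ∫ θ in (0:ℝ)..Real.pi,
      Real.log (‖Φ - Complex.exp (-θ * Complex.I)‖)
      = ∫ θ in Real.pi..(2 * Real.pi),
        Real.log (‖Φ - Complex.exp (θ * Complex.I)‖) := by
  set g : ℝ → ℝ := fun θ => Real.log (‖Φ - Complex.exp (θ * Complex.I)‖) with hg
  have h1 : (∫ x in (0:ℝ)..Real.pi, g (2 * Real.pi - x))
      = ∫ x in (2 * Real.pi - Real.pi)..(2 * Real.pi - 0), g x :=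
    intervalIntegral.integral_comp_sub_left g _
  rw [show 2 * Real.pi - Real.pi = Real.pi by ring, show 2 * Real.pi - 0 = 2 * Real.pi by ring]
    at h1
  rw [← h1]
  apply intervalIntegral.integral_congr
  intro θ _
  show Real.log (‖Φ - Complex.exp (-θ * Complex.I)‖) = g (2 * Real.pi - θ)
  rw [hg]
  simp only
  congr 2
  push_cast
  rw [show ((2:ℂ) * Real.pi - θ) * Complex.I = 2 * Real.pi * Complex.I + (-θ) * Complex.I by ring,
    Complex.exp_add, Complex.exp_two_pi_mul_I, one_mul]

private lemma sum_two (Φ : ℂ) (h : 1 < ‖Φ‖) :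
    (∫ θ in (0:ℝ)..Real.pi, Real.log (‖Φ - Complex.exp (θ * Complex.I)‖))
      + ∫ θ in (0:ℝ)..Real.pi, Real.log (‖Φ - Complex.exp (-θ * Complex.I)‖)
      = 2 * Real.pi * Real.log (‖Φ‖) := by
  rw [reflect_integral Φ, ← circle_log Φ h]
  exact intervalIntegral.integral_add_adjacent_intervals
    ((cont_phi Φ h).intervalIntegrable _ _) ((cont_phi Φ h).intervalIntegrable _ _)

private lemma pointwise_log (z w : ℂ) (hw : w ^ 2 = z ^ 2 - 1)
    (hb : 1 < ‖z + w‖) (θ : ℝ) :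
    Real.log (1 / ‖z - (Real.cos θ : ℂ)‖)
      = Real.log 2 + Real.log (‖z + w‖)
        - Real.log (‖(z + w) - Complex.exp (θ * Complex.I)‖)
        - Real.log (‖(z + w) - Complex.exp (-θ * Complex.I)‖) := by
  set Φ : ℂ := z + w with hΦdef
  set E : ℂ := Complex.exp (θ * Complex.I) with hE
  set E' : ℂ := Complex.exp (-θ * Complex.I) with hE'
  have hΦsq : Φ ^ 2 + 1 = 2 * z * Φ := by rw [hΦdef]; linear_combination hw
  have hEE : E * E' = 1 := by
    rw [hE, hE', ← Complex.exp_add]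
    norm_num
  have hcos : (Real.cos θ : ℂ) * 2 = E + E' := by
    rw [Complex.ofReal_cos, hE, hE']
    have := Complex.two_cos (x := (θ : ℂ))
    push_cast at this ⊢
    linear_combination this
  have hkey : (Φ - E) * (Φ - E') = 2 * Φ * (z - (Real.cos θ : ℂ)) := by
    linear_combination hΦsq + hEE + Φ * hcos
  have hΦ0 : Φ ≠ 0 := by
    intro hc; rw [hc] at hb; simp at hb; linarith
  have hne1 : Φ - E ≠ 0 := phi_sub_exp_ne Φ hb θ
  have hne2 : Φ - E' ≠ 0 := by
    have := phi_sub_exp_ne Φ hb (-θ)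
    rw [hE']
    push_cast at this
    exact this
  have hzc : z - (Real.cos θ : ℂ) ≠ 0 := by
    intro hc
    rw [hc, mul_zero] at hkey
    exact (mul_ne_zero hne1 hne2) hkey
  have habs : ‖z - (Real.cos θ : ℂ)‖
      = ‖Φ - E‖ * ‖Φ - E'‖ / (2 * ‖Φ‖) := by
    have h := congrArg norm hkey
    rw [norm_mul, norm_mul, norm_mul] at h
    have h2 : ‖(2:ℂ)‖ = 2 := by norm_num
    rw [h2] at h
    have hpos : (0:ℝ) < 2 * ‖Φ‖ := by
      have : (0:ℝ) < ‖Φ‖ := lt_trans one_pos hb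
      linarith
    rw [eq_div_iff (ne_of_gt hpos)]
    linear_combination -h
  rw [one_div, Real.log_inv, habs]
  rw [Real.log_div (mul_ne_zero (norm_ne_zero_iff.mpr hne1)
      (norm_ne_zero_iff.mpr hne2)) (by positivity)]
  rw [Real.log_mul (norm_ne_zero_iff.mpr hne1) (norm_ne_zero_iff.mpr hne2)]
  rw [Real.log_mul (by norm_num) (norm_ne_zero_iff.mpr hΦ0)]
  ring

end

/-- **Logarithmic potential of the arcsine measure off `[-1,1]`.** For `z ∈ ℂ \ [-1,1]`,
`U^{μ₀}(z) = log 2 − log|Φ(z)|`, where `Φ(z) = z + √(z²−1)` and the branch of the square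
root (here `w`, with `w² = z²−1`) is the one for which `|z + w| > 1`. -/
theorem arcsine_potential_outside (z : ℂ) (hz : z ∉ Complex.ofReal '' Set.Icc (-1 : ℝ) 1)
    (w : ℂ) (hw : w ^ 2 = z ^ 2 - 1) (hbranch : 1 < ‖z + w‖) :
    ∫ y in (-1 : ℝ)..1,
        Real.log (1 / ‖z - (y : ℂ)‖) * (1 / (Real.pi * Real.sqrt (1 - y ^ 2)))
      = Real.log 2 - Real.log (‖z + w‖) := by
  have hπ : (0:ℝ) < Real.pi := Real.pi_pos
  set Φ : ℂ := z + w with hΦdef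
  set g : ℝ → ℝ := fun y =>
    Real.log (1 / ‖z - (y:ℂ)‖) * (1 / (Real.pi * Real.sqrt (1 - y ^ 2))) with hgdef
  -- image of (0,π) under cos
  have himg : Real.cos '' (Set.Ioo 0 Real.pi) = Set.Ioo (-1:ℝ) 1 := by
    apply Set.Subset.antisymm
    · rintro y ⟨θ, hθ, rfl⟩
      constructor
      · have := Real.strictAntiOn_cos ⟨hθ.1.le, hθ.2.le⟩ ⟨hπ.le, le_refl _⟩ hθ.2
        rw [Real.cos_pi] at this; linarith
      · have := Real.strictAntiOn_cos ⟨le_refl 0, hπ.le⟩ ⟨hθ.1.le, hθ.2.le⟩ hθ.1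
        rw [Real.cos_zero] at this; linarith
    · rintro y hy
      refine ⟨Real.arccos y, ⟨Real.arccos_pos.2 hy.2, ?_⟩, Real.cos_arccos hy.1.le hy.2.le⟩
      rw [Real.arccos]
      have := Real.neg_pi_div_two_lt_arcsin.2 hy.1
      linarith
  have hsub : ∫ y in Set.Ioo (-1:ℝ) 1, g y
      = ∫ θ in Set.Ioo (0:ℝ) Real.pi, |(-Real.sin θ)| • g (Real.cos θ) := by
    rw [← himg]
    exact MeasureTheory.integral_image_eq_integral_abs_deriv_smul measurableSet_Ioo
      (fun x _ => (Real.hasDerivAt_cos x).hasDerivWithinAt)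
      (Real.injOn_cos.mono Set.Ioo_subset_Icc_self) g
  have hcongr : ∫ θ in Set.Ioo (0:ℝ) Real.pi, |(-Real.sin θ)| • g (Real.cos θ)
      = ∫ θ in Set.Ioo (0:ℝ) Real.pi,
          Real.log (1 / ‖z - (Real.cos θ : ℂ)‖) * (1/Real.pi) := by
    apply MeasureTheory.setIntegral_congr_fun measurableSet_Ioo
    intro θ hθ
    have hsin : 0 < Real.sin θ := Real.sin_pos_of_pos_of_lt_pi hθ.1 hθ.2
    have hsqrt : Real.sqrt (1 - Real.cos θ ^ 2) = Real.sin θ := by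
      rw [show 1 - Real.cos θ ^ 2 = Real.sin θ ^ 2 by
        nlinarith [Real.sin_sq_add_cos_sq θ], Real.sqrt_sq hsin.le]
    simp only [hgdef, smul_eq_mul, abs_neg, abs_of_pos hsin, hsqrt]
    field_simp
  have hIoc1 : ∫ y in (-1:ℝ)..1, g y = ∫ y in Set.Ioo (-1:ℝ) 1, g y := by
    rw [intervalIntegral.integral_of_le (by norm_num), MeasureTheory.integral_Ioc_eq_integral_Ioo]
  have hIoc2 : ∫ θ in (0:ℝ)..Real.pi,
        Real.log (1 / ‖z - (Real.cos θ : ℂ)‖) * (1/Real.pi)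
      = ∫ θ in Set.Ioo (0:ℝ) Real.pi,
        Real.log (1 / ‖z - (Real.cos θ : ℂ)‖) * (1/Real.pi) := by
    rw [intervalIntegral.integral_of_le hπ.le, MeasureTheory.integral_Ioc_eq_integral_Ioo]
  -- integrability
  have int1 : IntervalIntegrable
      (fun θ : ℝ => Real.log (‖Φ - Complex.exp (θ * Complex.I)‖))
      MeasureTheory.volume 0 Real.pi := (cont_phi Φ hbranch).intervalIntegrable _ _
  have cont2 : Continuous fun θ : ℝ =>
      Real.log (‖Φ - Complex.exp (-θ * Complex.I)‖) := by
    apply Continuous.log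
    · exact continuous_norm.comp (by continuity)
    · intro θ
      simp only [ne_eq, norm_eq_zero]
      have := phi_sub_exp_ne Φ hbranch (-θ)
      push_cast at this
      exact this
  have int2 : IntervalIntegrable
      (fun θ : ℝ => Real.log (‖Φ - Complex.exp (-θ * Complex.I)‖))
      MeasureTheory.volume 0 Real.pi := cont2.intervalIntegrable _ _
  have hsum := sum_two Φ hbranch
  calc ∫ y in (-1:ℝ)..1, g y
      = ∫ θ in (0:ℝ)..Real.pi,
          Real.log (1 / ‖z - (Real.cos θ : ℂ)‖) * (1/Real.pi) := by
        rw [hIoc1, hsub, hcongr, ← hIoc2]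
    _ = ∫ θ in (0:ℝ)..Real.pi,
          (Real.log 2 + Real.log (‖Φ‖)
            - Real.log (‖Φ - Complex.exp (θ * Complex.I)‖)
            - Real.log (‖Φ - Complex.exp (-θ * Complex.I)‖)) * (1/Real.pi) := by
        apply intervalIntegral.integral_congr
        intro θ _
        simp only
        rw [pointwise_log z w hw hbranch θ]
    _ = (∫ θ in (0:ℝ)..Real.pi,
          (Real.log 2 + Real.log (‖Φ‖)
            - Real.log (‖Φ - Complex.exp (θ * Complex.I)‖)
            - Real.log (‖Φ - Complex.exp (-θ * Complex.I)‖))) * (1/Real.pi) :=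
        intervalIntegral.integral_mul_const _ _
    _ = Real.log 2 - Real.log (‖Φ‖) := by
        rw [intervalIntegral.integral_sub (intervalIntegrable_const.sub int1) int2,
          intervalIntegral.integral_sub intervalIntegrable_const int1,
          intervalIntegral.integral_const]
        have hval : (Real.pi - 0) • (Real.log 2 + Real.log (‖Φ‖))
            - (∫ θ in (0:ℝ)..Real.pi,
                Real.log (‖Φ - Complex.exp (θ * Complex.I)‖))
            - (∫ θ in (0:ℝ)..Real.pi,
                Real.log (‖Φ - Complex.exp (-θ * Complex.I)‖))
            = Real.pi * (Real.log 2 - Real.log (‖Φ‖)) := by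
          rw [smul_eq_mul]
          linarith [hsum]
        rw [hval]
        field_simp
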